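/- The real ω-Lie algebras B₁ and B₋₁, given on a basis {x,y,z} of a 3-dimensional real vector space by [x,y] = y, [x,z] = y+z, [y,z] = x, ω(x,y) = ω(x,z) = 0, ω(y,z) = 2 for B₁, and by [x,y] = y, [x,z] = y+z, [y,z] = −x, ω(x,y) = ω(x,z) = 0, ω(y,z) = −2 for B₋₁, are NOT isomorphic as real ω-Lie algebras. -/
import Mathlib


/-- The bracket of the real `B₁` on `ℝ³`: the bilinear extension of `[x,y] = y`,
`[x,z] = y + z`, `[y,z] = x` on the standard basis `x = e₀, y = e₁, z = e₂`. -/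
def brB1 (u v : Fin 3 → ℝ) : Fin 3 → ℝ :=
  ![u 1 * v 2 - u 2 * v 1, (u 0 * v 1 - u 1 * v 0) + (u 0 * v 2 - u 2 * v 0),
    u 0 * v 2 - u 2 * v 0]

/-- The form of the real `B₁`: the bilinear extension of `ω(x,y) = ω(x,z) = 0`,
`ω(y,z) = 2`. -/
def omB1 (u v : Fin 3 → ℝ) : ℝ := 2 * (u 1 * v 2 - u 2 * v 1)

/-- The bracket of the real `B₋₁` on `ℝ³`: the bilinear extension of `[x,y] = y`,
`[x,z] = y + z`, `[y,z] = -x`. -/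
def brBm1 (u v : Fin 3 → ℝ) : Fin 3 → ℝ :=
  ![-(u 1 * v 2 - u 2 * v 1), (u 0 * v 1 - u 1 * v 0) + (u 0 * v 2 - u 2 * v 0),
    u 0 * v 2 - u 2 * v 0]

/-- The form of the real `B₋₁`: the bilinear extension of `ω(x,y) = ω(x,z) = 0`,
`ω(y,z) = -2`. -/
def omBm1 (u v : Fin 3 → ℝ) : ℝ := -2 * (u 1 * v 2 - u 2 * v 1)

/-- The real ω-Lie algebras `B₁` and `B₋₁` are NOT isomorphic: there is no real linear
bijection intertwining the brackets and the bilinear forms. -/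
theorem B1_not_iso_Bm1_real :
    ¬ ∃ f : (Fin 3 → ℝ) ≃ₗ[ℝ] (Fin 3 → ℝ),
      (∀ a b : Fin 3 → ℝ, f (brB1 a b) = brBm1 (f a) (f b)) ∧
      (∀ a b : Fin 3 → ℝ, omBm1 (f a) (f b) = omB1 a b) := by
  rintro ⟨f, hbr, hom⟩
  set x : Fin 3 → ℝ := ![1,0,0] with hx
  set y : Fin 3 → ℝ := ![0,1,0] with hy
  set z : Fin 3 → ℝ := ![0,0,1] with hz
  have hxy : brB1 x y = y := by funext i; fin_cases i <;> simp [brB1, hx, hy]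
  have hxz : brB1 x z = y + z := by funext i; fin_cases i <;> simp [brB1, hx, hy, hz]
  have hyz : brB1 y z = x := by funext i; fin_cases i <;> simp [brB1, hx, hy, hz]
  have h1 := hbr x y
  have h2 := hbr x z
  have h3 := hbr y z
  rw [hxy] at h1
  rw [hxz, map_add] at h2
  rw [hyz] at h3
  have w1 := hom x y
  have w2 := hom x z
  have w3 := hom y z
  have o1 : omB1 x y = 0 := by simp [omB1, hx, hy]
  have o2 : omB1 x z = 0 := by simp [omB1, hx, hz]
  have o3 : omB1 y z = 2 := by simp [omB1, hy, hz]
  rw [o1] at w1; rw [o2] at w2; rw [o3] at w3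
  have e10 := congrFun h1 0
  have e11 := congrFun h1 1
  have e12 := congrFun h1 2
  have e20 := congrFun h2 0
  have e21 := congrFun h2 1
  have e22 := congrFun h2 2
  have e30 := congrFun h3 0
  have e31 := congrFun h3 1
  have e32 := congrFun h3 2
  simp only [brBm1, omBm1, Pi.add_apply, Matrix.cons_val_zero, Matrix.cons_val_one,
    Matrix.head_cons, Matrix.cons_val_two, Matrix.tail_cons]
    at e10 e11 e12 e20 e21 e22 e30 e31 e32 w1 w2 w3
  revert w1 w2 w3 e10 e11 e12 e20 e21 e22 e30 e31 e32
  generalize f x 0 = a0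
  generalize f x 1 = a1
  generalize f x 2 = a2
  generalize f y 0 = b0
  generalize f y 1 = b1
  generalize f y 2 = b2
  generalize f z 0 = c0
  generalize f z 1 = c1
  generalize f z 2 = c2
  intro w1 w2 w3 e10 e11 e12 e20 e21 e22 e30 e31 e32
  have hb0 : b0 = 0 := by linarith
  have hc0 : c0 = 0 := by linarith
  have ha0 : a0 = 1 := by linarith
  subst hb0 hc0 ha0
  simp only [mul_zero, zero_mul, sub_zero, zero_sub, one_mul] at *
  have ha2 : a2 = 0 := by linarith
  have ha1 : a1 = 0 := by linarith
  subst ha1 ha2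
  simp only [mul_zero, zero_mul, sub_zero, zero_sub, one_mul, neg_zero, add_zero, zero_add] at *
  have hb2 : b2 = 0 := by linarith
  have hc2 : c2 = b1 := by linarith
  rw [hc2, hb2] at w3
  nlinarith [sq_nonneg b1]
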